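/- arXiv:math/9406228 — 2 statements merged into one kernel-verified Lean document; each statement's English description precedes it below -/
import Mathlib

section
/- For every tree T with μ(Lim T) > 0, every ε > 0 and every sequence (ε_i)_{0<i<ω} of positive reals, there is a subtree T' of T and an increasing sequence (n_i)_{i<ω} with n_0 = 0 such that μ(Lim T') > μ(Lim T) − ε and for every i > 0 and every η ∈ 2^{n_i} ∩ T', μ(Lim(T'^{[η]})) > 2^{−n_i}(1 − ε_i). -/
open MeasureTheory Pointwise

/-- Cantor space `2^ω` with componentwise addition mod 2. -/
abbrev Cantor : Type := ℕ → ZMod 2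
/-- Finite binary sequences, the nodes of `2^{<ω}`. -/
abbrev FinSeq : Type := List (ZMod 2)

instance : TopologicalSpace (ZMod 2) := ⊥
instance : DiscreteTopology (ZMod 2) := ⟨rfl⟩
noncomputable instance : MeasurableSpace Cantor := borel Cantor
instance : BorelSpace Cantor := ⟨rfl⟩

/-- The uniform (Lebesgue) product measure on `2^ω`, realized as the Haar measure of the
compact group `2^ω` normalized so that the whole space has measure 1. -/
noncomputable def μC : Measure Cantor := Measure.addHaarMeasure ⊤

/-- `X` is null-additive: `X + A` is null for every null `A`. -/
def NullAdditive (X : Set Cantor) : Prop := ∀ A : Set Cantor, μC A = 0 → μC (X + A) = 0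

/-- `X` is meager-additive: `X + A` is meager for every meager `A`. -/
def MeagerAdditive (X : Set Cantor) : Prop := ∀ A : Set Cantor, IsMeagre A → IsMeagre (X + A)

/-- A tree on `2^{<ω}`: nonempty, closed under initial segments, and every node has
extensions in the tree of every greater length. -/
def IsTree (T : Set FinSeq) : Prop :=
  T.Nonempty ∧ (∀ σ τ : FinSeq, σ <+: τ → τ ∈ T → σ ∈ T) ∧
    ∀ σ ∈ T, ∀ n, σ.length < n → ∃ τ ∈ T, σ <+: τ ∧ τ.length = n

/-- Restriction `x↾n` of `x ∈ 2^ω`. -/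
def res (x : Cantor) (n : ℕ) : FinSeq := (List.range n).map x

/-- `Lim T = {x ∈ 2^ω : ∀ n, x↾n ∈ T}`. -/
def LimT (T : Set FinSeq) : Set Cantor := {x | ∀ n, res x n ∈ T}

/-- A nowhere dense tree: every node has an extension outside the tree. -/
def NwdTree (T : Set FinSeq) : Prop := ∀ η ∈ T, ∃ τ : FinSeq, η <+: τ ∧ τ ∉ T

/-- Componentwise mod-2 addition of finite sequences (of the same length). -/
def finAdd : FinSeq → FinSeq → FinSeq := List.zipWith (· + ·)

/-- `T + S = {η + σ : η ∈ T, σ ∈ S, same length}`. -/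
def treeSum (T S : Set FinSeq) : Set FinSeq :=
  {ρ | ∃ η ∈ T, ∃ σ ∈ S, η.length = σ.length ∧ ρ = finAdd η σ}

/-- `T^{[η]} = {τ ∈ T : τ ⊑ η or η ⊑ τ}`. -/
def through (T : Set FinSeq) (η : FinSeq) : Set FinSeq := {τ ∈ T | τ <+: η ∨ η <+: τ}

/-- `A^{fin}`: points agreeing with some point of `A` at all but finitely many coordinates. -/
def finEq (A : Set Cantor) : Set Cantor := {y | ∃ x ∈ A, ∀ᶠ n in Filter.atTop, y n = x n}

/-- `U^{⟨ν⟩} = {τ : ν⌢τ ∈ U}`. -/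
def above (U : Set FinSeq) (ν : FinSeq) : Set FinSeq := {τ | ν ++ τ ∈ U}

/-- A corset: a nondecreasing function `ω → ω \ {0}` tending to infinity. -/
def Corset (f : ℕ → ℕ) : Prop :=
  Monotone f ∧ (∀ n, 0 < f n) ∧ Filter.Tendsto f Filter.atTop Filter.atTop

/-- `S` is of width `f`: `|S ∩ 2^n| ≤ f n` for all `n`. -/
def widthLe (S : Set FinSeq) (f : ℕ → ℕ) : Prop := ∀ n, {τ ∈ S | τ.length = n}.ncard ≤ f n

/-- `S` is almost of width `f`: `|S ∩ 2^n| ≤ f n` for all sufficiently large `n`. -/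
def almostWidthLe (S : Set FinSeq) (f : ℕ → ℕ) : Prop :=
  ∀ᶠ n in Filter.atTop, {τ ∈ S | τ.length = n}.ncard ≤ f n

lemma res_length (x : Cantor) (n : ℕ) : (res x n).length = n := by simp [res]

lemma res_take (x : Cantor) {m n : ℕ} (h : m ≤ n) : (res x n).take m = res x m := by
  simp [res, ← List.map_take, List.take_range, Nat.min_eq_left h]

lemma res_prefix (x : Cantor) {m n : ℕ} (h : m ≤ n) : res x m <+: res x n := by
  rw [← res_take x h]; exact List.take_prefix _ _

lemma mem_res_cyl (x : Cantor) (η : FinSeq) :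
    res x η.length = η ↔ ∀ i < η.length, x i = η.getD i 0 := by
  constructor
  · intro h i hi
    have := congrArg (fun l => l.getD i 0) h
    simpa [res, hi] using this
  · intro h
    apply List.ext_getElem (by simp [res])
    intro i h1 h2
    have := h i (by simpa [res_length] using h1)
    simp only [res, List.getElem_map, List.getElem_range]
    rw [this, List.getD_eq_getElem _ _ h2]

lemma res_eq_iff (x : Cantor) (η : FinSeq) (n : ℕ) (hn : η.length = n) :
    res x n = η ↔ ∀ i < n, x i = η.getD i 0 := by
  subst hn; exact mem_res_cyl x η

def cyl (η : FinSeq) : Set Cantor := {x | res x η.length = η}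

lemma cyl_eq (η : FinSeq) :
    cyl η = ⋂ i ∈ Finset.range η.length, (fun x : Cantor => x i) ⁻¹' {η.getD i 0} := by
  ext x
  simp [cyl, mem_res_cyl]

lemma isClopen_cyl (η : FinSeq) : IsClopen (cyl η) := by
  rw [cyl_eq]
  exact isClopen_biInter_finset (fun i _ => (isClopen_discrete _).preimage (continuous_apply i))

lemma measurableSet_cyl (η : FinSeq) : MeasurableSet (cyl η) :=
  (isClopen_cyl η).2.measurableSet

lemma cyl_nil : cyl ([] : FinSeq) = Set.univ := by
  ext x; simp [cyl, res]

lemma mem_cyl_concat (x : Cantor) (η : FinSeq) (b : ZMod 2) :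
    x ∈ cyl (η ++ [b]) ↔ x ∈ cyl η ∧ x η.length = b := by
  have e1 : x ∈ cyl (η ++ [b]) ↔ ∀ i < η.length + 1, x i = (η ++ [b]).getD i 0 := by
    rw [cyl, Set.mem_setOf_eq, res_eq_iff _ _ _ (by simp)]
    simp only [List.length_append, List.length_singleton]
  rw [e1, cyl, Set.mem_setOf_eq, mem_res_cyl]
  constructor
  · intro h
    refine ⟨fun i hi => ?_, ?_⟩
    · have := h i (by omega)
      rwa [List.getD_append _ _ _ _ hi] at this
    · have := h η.length (by omega)
      simpa using this
  · rintro ⟨h1, h2⟩ i hi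
    rcases Nat.lt_or_ge i η.length with hi' | hi'
    · rw [List.getD_append _ _ _ _ hi']; exact h1 i hi'
    · have : i = η.length := by omega
      subst this; simpa using h2

lemma μC_univ : μC Set.univ = 1 := by
  have := MeasureTheory.Measure.addHaarMeasure_self (K₀ := (⊤ : TopologicalSpace.PositiveCompacts Cantor))
  simpa [μC] using this

instance : IsProbabilityMeasure μC := ⟨μC_univ⟩

instance : μC.IsAddLeftInvariant := by unfold μC; infer_instance

lemma μC_cyl (η : FinSeq) : μC (cyl η) = (2 : ENNReal)⁻¹ ^ η.length := by
  induction η using List.reverseRecOn with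
  | nil => simp [cyl_nil, μC_univ]
  | append_singleton η b ih =>
    have hsplit : cyl η = cyl (η ++ [0]) ∪ cyl (η ++ [1]) := by
      ext x
      simp only [Set.mem_union, mem_cyl_concat]
      constructor
      · intro h
        rcases (by decide : ∀ c : ZMod 2, c = 0 ∨ c = 1) (x η.length) with h2 | h2
        · exact Or.inl ⟨h, h2⟩
        · exact Or.inr ⟨h, h2⟩
      · rintro (⟨h, _⟩ | ⟨h, _⟩) <;> exact h
    have hdisj : Disjoint (cyl (η ++ [0])) (cyl (η ++ [1])) := by
      rw [Set.disjoint_left]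
      intro x h0 h1
      rw [mem_cyl_concat] at h0 h1
      have := h0.2.symm.trans h1.2
      simp at this
    have htrans : cyl (η ++ [1]) =
        (fun x : Cantor => (fun i => if i = η.length then (1 : ZMod 2) else 0) + x) ⁻¹' cyl (η ++ [0]) := by
      ext x
      simp only [Set.mem_preimage, mem_cyl_concat, Pi.add_apply]
      constructor
      · rintro ⟨h, h2⟩
        constructor
        · rw [cyl, Set.mem_setOf_eq, mem_res_cyl] at h ⊢
          intro i hi
          have := h i hi
          simpa [Nat.ne_of_lt hi] using this
        · simp only [if_true]
          rw [h2]; decide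
      · rintro ⟨h, h2⟩
        constructor
        · rw [cyl, Set.mem_setOf_eq, mem_res_cyl] at h ⊢
          intro i hi
          have := h i hi
          simpa [Nat.ne_of_lt hi] using this
        · simp only [if_true] at h2
          have : ∀ c : ZMod 2, 1 + c = 0 → c = 1 := by decide
          exact this _ h2
    have heq : μC (cyl (η ++ [1])) = μC (cyl (η ++ [0])) := by
      rw [htrans, measure_preimage_add]
    have hm : (2 : ENNReal)⁻¹ ^ η.length = 2 * μC (cyl (η ++ [0])) := by
      rw [← ih, hsplit, measure_union hdisj (measurableSet_cyl _), heq, two_mul]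
    have h0 : μC (cyl (η ++ [0])) = (2 : ENNReal)⁻¹ ^ (η.length + 1) := by
      have : (2 : ENNReal) * ((2 : ENNReal)⁻¹ ^ (η.length + 1)) = 2 * μC (cyl (η ++ [0])) := by
        rw [← hm, pow_succ, mul_comm ((2 : ENNReal)⁻¹ ^ η.length), ← mul_assoc,
          ENNReal.mul_inv_cancel (by norm_num) (by norm_num), one_mul]
      exact ((ENNReal.mul_right_inj (by norm_num) (by norm_num)).mp this).symm
    rcases (by decide : ∀ c : ZMod 2, c = 0 ∨ c = 1) b with hb | hb <;> subst hb
    · simpa using h0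
    · rw [heq]; simpa using h0


def level (T : Set FinSeq) (n : ℕ) : Set FinSeq := {η ∈ T | η.length = n}

lemma level_finite (T : Set FinSeq) (n : ℕ) : (level T n).Finite :=
  (List.finite_length_eq (α := ZMod 2) (n := n)).subset (fun _ h => h.2)

def lvlSet (T : Set FinSeq) (n : ℕ) : Set Cantor := {x | res x n ∈ T}

lemma lvlSet_eq (T : Set FinSeq) (n : ℕ) : lvlSet T n = ⋃ η ∈ level T n, cyl η := by
  ext x
  simp only [lvlSet, Set.mem_setOf_eq, Set.mem_iUnion, level]
  constructor
  · intro h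
    exact ⟨res x n, ⟨h, res_length x n⟩, by rw [cyl, Set.mem_setOf_eq, res_length]⟩
  · rintro ⟨η, ⟨hη, hlen⟩, hx⟩
    rw [cyl, Set.mem_setOf_eq] at hx
    rw [← hlen, hx]
    exact hη

lemma measurableSet_lvlSet (T : Set FinSeq) (n : ℕ) : MeasurableSet (lvlSet T n) := by
  rw [lvlSet_eq]
  exact MeasurableSet.biUnion (level_finite T n).countable (fun η _ => measurableSet_cyl η)

lemma cyl_disjoint {η η' : FinSeq} (hlen : η.length = η'.length) (hne : η ≠ η') :
    Disjoint (cyl η) (cyl η') := by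
  rw [Set.disjoint_left]
  intro x h1 h2
  rw [cyl, Set.mem_setOf_eq] at h1 h2
  rw [hlen] at h1
  exact hne (h1.symm.trans h2)

lemma LimT_eq_iInter (T : Set FinSeq) : LimT T = ⋂ n, lvlSet T n := by
  ext x; simp [LimT, lvlSet]

lemma measurableSet_LimT (T : Set FinSeq) : MeasurableSet (LimT T) := by
  rw [LimT_eq_iInter]
  exact MeasurableSet.iInter (fun n => measurableSet_lvlSet T n)

lemma lvlSet_antitone {T : Set FinSeq} (hT : ∀ σ τ : FinSeq, σ <+: τ → τ ∈ T → σ ∈ T) :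
    Antitone (lvlSet T) := by
  intro m n h x hx
  exact hT _ _ (res_prefix x h) hx

/-- Approximation of the measure of `LimT` by level sets. -/
lemma exists_level_approx (T : Set FinSeq) (hT : ∀ σ τ : FinSeq, σ <+: τ → τ ∈ T → σ ∈ T)
    (γ : ENNReal) (hγ : 0 < γ) (N : ℕ) :
    ∃ n, N < n ∧ μC (lvlSet T n) < μC (LimT T) + γ := by
  have hten : Filter.Tendsto (fun n => μC (lvlSet T n)) Filter.atTop (nhds (μC (LimT T))) := by
    rw [LimT_eq_iInter]
    exact tendsto_measure_iInter_atTop (fun n => (measurableSet_lvlSet T n).nullMeasurableSet)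
      (lvlSet_antitone hT) ⟨0, (measure_lt_top μC _).ne⟩
  have hlt : μC (LimT T) < μC (LimT T) + γ :=
    ENNReal.lt_add_right (measure_lt_top μC _).ne hγ.ne'
  rcases ((hten.eventually_lt_const hlt).and (Filter.eventually_gt_atTop N)).exists with ⟨n, h1, h2⟩
  exact ⟨n, h2, h1⟩


lemma measure_decomp (T : Set FinSeq) (n : ℕ) (A : Set Cantor) (hA : MeasurableSet A) :
    μC (A ∩ lvlSet T n) = ∑ η ∈ (level_finite T n).toFinset, μC (A ∩ cyl η) := by
  have : A ∩ lvlSet T n = ⋃ η ∈ (level_finite T n).toFinset, (A ∩ cyl η) := by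
    rw [lvlSet_eq]
    ext x
    simp only [Set.mem_inter_iff, Set.mem_iUnion, Set.Finite.mem_toFinset, exists_prop]
    tauto
  rw [this, measure_biUnion_finset ?_ (fun η _ => hA.inter (measurableSet_cyl η))]
  intro η hη η' hη' hne
  simp only [Finset.mem_coe, Set.Finite.mem_toFinset] at hη hη'
  exact Set.disjoint_of_subset Set.inter_subset_right Set.inter_subset_right
    (cyl_disjoint (hη.2.trans hη'.2.symm) hne)

lemma measure_lvlSet (T : Set FinSeq) (n : ℕ) :
    μC (lvlSet T n) = (level_finite T n).toFinset.card * (2 : ENNReal)⁻¹ ^ n := by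
  have := measure_decomp T n Set.univ MeasurableSet.univ
  rw [Set.univ_inter] at this
  rw [this, Finset.sum_congr rfl (fun η hη => ?_), Finset.sum_const, nsmul_eq_mul]
  rw [Set.univ_inter, μC_cyl, (Set.Finite.mem_toFinset _ |>.mp hη).2]


lemma LimT_mono {S T : Set FinSeq} (h : S ⊆ T) : LimT S ⊆ LimT T := fun _ hx n => h (hx n)

lemma mem_cyl_res (x : Cantor) (n : ℕ) : x ∈ cyl (res x n) := by
  show res x (res x n).length = res x n
  rw [res_length]

lemma onestep (S : Set FinSeq) (hS : IsTree S) (δ β : ENNReal)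
    (hδ0 : 0 < δ) (hδ1 : δ ≤ 1) (hβ0 : 0 < β) (hβm : β < μC (LimT S)) (N : ℕ) :
    ∃ n, N < n ∧ ∃ S', IsTree S' ∧ S' ⊆ S ∧
      μC (LimT S) ≤ μC (LimT S') + β ∧
      ∀ η ∈ S', η.length = n → (1 - δ) * (2 : ENNReal)⁻¹ ^ n < μC (LimT S' ∩ cyl η) := by
  classical
  obtain ⟨hne, hcl, hext⟩ := hS
  have hmtop : μC (LimT S) ≠ ⊤ := (measure_lt_top μC _).ne
  have hβtop : β ≠ ⊤ := (hβm.trans_le le_top).ne_top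
  have hδtop : δ ≠ ⊤ := (hδ1.trans_lt ENNReal.one_lt_top).ne
  have hγ : 0 < δ * β := ENNReal.mul_pos hδ0.ne' hβ0.ne'
  obtain ⟨n, hNn, happrox⟩ := exists_level_approx S hcl (δ * β) hγ N
  set m := μC (LimT S) with hm
  set x2 : ENNReal := (2 : ENNReal)⁻¹ ^ n with hx2
  have hx2top : x2 ≠ ⊤ := ENNReal.pow_ne_top (ENNReal.inv_ne_top.mpr (by norm_num))
  set F := (level_finite S n).toFinset with hF
  set G := F.filter (fun η => (1 - δ) * x2 < μC (LimT S ∩ cyl η)) with hG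
  set B := F.filter (fun η => ¬ ((1 - δ) * x2 < μC (LimT S ∩ cyl η))) with hB
  have hmemF : ∀ η, η ∈ F ↔ (η ∈ S ∧ η.length = n) := by
    intro η; rw [hF, Set.Finite.mem_toFinset]; exact Iff.rfl
  have hLimSub : LimT S ∩ lvlSet S n = LimT S := Set.inter_eq_left.mpr (fun x hx => hx n)
  have hmsum : m = ∑ η ∈ F, μC (LimT S ∩ cyl η) := by
    have h := measure_decomp S n (LimT S) (measurableSet_LimT S)
    rw [hLimSub] at h
    exact h
  have hlvl : μC (lvlSet S n) = F.card * x2 := by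
    rw [measure_lvlSet]
  -- the key counting bound
  have hkey : m + B.card * (δ * x2) ≤ μC (lvlSet S n) := by
    have h1 : ∀ η ∈ F, μC (LimT S ∩ cyl η) + (if η ∈ B then δ * x2 else 0) ≤ x2 := by
      intro η hη
      have hcylm : μC (LimT S ∩ cyl η) ≤ x2 := by
        rw [hx2, ← ((hmemF η).mp hη).2, ← μC_cyl η]
        exact measure_mono Set.inter_subset_right
      by_cases hb : η ∈ B
      · rw [if_pos hb]
        have hbad : μC (LimT S ∩ cyl η) ≤ (1 - δ) * x2 := by
          rw [hB, Finset.mem_filter] at hb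
          exact not_lt.mp hb.2
        calc μC (LimT S ∩ cyl η) + δ * x2 ≤ (1 - δ) * x2 + δ * x2 :=
              add_le_add_left hbad _
          _ = ((1 - δ) + δ) * x2 := by rw [add_mul]
          _ = x2 := by rw [tsub_add_cancel_of_le hδ1, one_mul]
      · rw [if_neg hb, add_zero]; exact hcylm
    have h2 := Finset.sum_le_sum h1
    rw [Finset.sum_add_distrib, Finset.sum_ite_mem, Finset.sum_const, Finset.sum_const] at h2
    have hBF : F ∩ B = B := Finset.inter_eq_right.mpr (Finset.filter_subset _ _)
    rw [hBF] at h2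
    rw [hmsum, hlvl]
    simpa [nsmul_eq_mul] using h2
  have hBsmall : (B.card : ENNReal) * x2 < β := by
    have h3 : m + B.card * (δ * x2) < m + δ * β := lt_of_le_of_lt hkey happrox
    have h4 : (B.card : ENNReal) * (δ * x2) < δ * β :=
      (ENNReal.add_lt_add_iff_left hmtop).mp h3
    have h5 : δ * ((B.card : ENNReal) * x2) < δ * β := by
      rw [show δ * ((B.card : ENNReal) * x2) = (B.card : ENNReal) * (δ * x2) by ring]
      exact h4
    exact (ENNReal.mul_lt_mul_iff_right hδ0.ne' hδtop).mp h5
  have hBun : μC (⋃ η ∈ B, cyl η) ≤ (B.card : ENNReal) * x2 := by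
    refine le_trans (measure_biUnion_finset_le B cyl) ?_
    have : ∀ η ∈ B, μC (cyl η) = x2 := by
      intro η hη
      rw [μC_cyl, hx2, ((hmemF η).mp (Finset.filter_subset _ _ hη)).2]
    rw [Finset.sum_congr rfl this, Finset.sum_const, nsmul_eq_mul]
  -- the pruned tree
  set S' := {τ ∈ S | ∃ η ∈ G, τ <+: η ∨ η <+: τ} with hS'
  have hGS : ∀ η ∈ G, η ∈ S ∧ η.length = n := fun η hη => (hmemF η).mp (Finset.filter_subset _ _ hη)
  have hS'sub : S' ⊆ S := fun τ hτ => hτ.1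
  -- nonemptiness of G
  have hGne : G.Nonempty := by
    by_contra hGe
    rw [Finset.not_nonempty_iff_eq_empty] at hGe
    have hcover : LimT S ⊆ ⋃ η ∈ B, cyl η := by
      intro x hx
      have hxF : res x n ∈ F := (hmemF _).mpr ⟨hx n, res_length x n⟩
      have hxB : res x n ∈ B := by
        rw [hB, Finset.mem_filter]
        refine ⟨hxF, ?_⟩
        intro hlt
        have : res x n ∈ G := by rw [hG, Finset.mem_filter]; exact ⟨hxF, hlt⟩
        simp [hGe] at this
      exact Set.mem_biUnion hxB (mem_cyl_res x n)
    have : m < β := lt_of_le_of_lt (le_trans (measure_mono hcover) hBun) hBsmall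
    exact absurd hβm (not_lt.mpr this.le)
  -- S' is a tree
  have hS'tree : IsTree S' := by
    refine ⟨?_, ?_, ?_⟩
    · obtain ⟨η, hη⟩ := hGne
      exact ⟨η, (hGS η hη).1, η, hη, Or.inl (List.prefix_refl η)⟩
    · rintro σ τ hστ ⟨hτS, η, hη, hcompat⟩
      refine ⟨hcl σ τ hστ hτS, η, hη, ?_⟩
      rcases hcompat with h | h
      · exact Or.inl (hστ.trans h)
      · exact List.prefix_or_prefix_of_prefix hστ h
    · rintro τ ⟨hτS, η, hη, hcompat⟩ k hk
      -- ρ₀ : the longer of τ and η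
      set ρ₀ := if τ <+: η then η else τ with hρ₀
      have hρ₀S : ρ₀ ∈ S := by
        rw [hρ₀]; split <;> [exact (hGS η hη).1; exact hτS]
      have hτρ₀ : τ <+: ρ₀ := by
        rw [hρ₀]; split
        · assumption
        · exact List.prefix_refl τ
      have hηρ₀ : η <+: ρ₀ := by
        rw [hρ₀]; split
        · exact List.prefix_refl η
        · rcases hcompat with h | h
          · exact absurd h (by assumption)
          · exact h
      rcases Nat.lt_or_ge ρ₀.length k with hlong | hshort
      · obtain ⟨ρ, hρS, hρpre, hρlen⟩ := hext ρ₀ hρ₀S k hlong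
        exact ⟨ρ, ⟨hρS, η, hη, Or.inr (hηρ₀.trans hρpre)⟩, hτρ₀.trans hρpre, hρlen⟩
      · refine ⟨ρ₀.take k, ⟨hcl _ ρ₀ (List.take_prefix k ρ₀) hρ₀S, η, hη, ?_⟩, ?_, ?_⟩
        · exact List.prefix_or_prefix_of_prefix (List.take_prefix k ρ₀) hηρ₀
        · exact List.prefix_of_prefix_length_le hτρ₀ (List.take_prefix k ρ₀)
            (by rw [List.length_take]; omega)
        · rw [List.length_take]; omega
  -- Lim equality on good cylinders
  have hLimEq : ∀ η ∈ G, LimT S ∩ cyl η = LimT S' ∩ cyl η := by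
    intro η hη
    apply Set.Subset.antisymm
    · rintro x ⟨hx, hxc⟩
      refine ⟨fun k => ⟨hx k, η, hη, ?_⟩, hxc⟩
      have hresn : res x n = η := by
        have := hxc
        rw [cyl, Set.mem_setOf_eq, (hGS η hη).2] at this
        exact this
      rcases le_or_gt k n with hkn | hkn
      · exact Or.inl (hresn ▸ res_prefix x hkn)
      · exact Or.inr (hresn ▸ res_prefix x hkn.le)
    · exact Set.inter_subset_inter_left _ (LimT_mono hS'sub)
  -- level-n nodes of S' are in G
  have hLvlG : ∀ η ∈ S', η.length = n → η ∈ G := by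
    rintro τ ⟨hτS, η, hη, hcompat⟩ hlen
    have : τ = η := by
      rcases hcompat with h | h
      · exact h.eq_of_length (hlen.trans (hGS η hη).2.symm)
      · exact (h.eq_of_length ((hGS η hη).2.trans hlen.symm)).symm
    rw [this]; exact hη
  refine ⟨n, hNn, S', hS'tree, hS'sub, ?_, ?_⟩
  · -- measure bound
    have hcover : LimT S ⊆ LimT S' ∪ ⋃ η ∈ B, cyl η := by
      intro x hx
      have hxF : res x n ∈ F := (hmemF _).mpr ⟨hx n, res_length x n⟩
      by_cases hg : res x n ∈ G
      · left
        have : x ∈ LimT S' ∩ cyl (res x n) := by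
          rw [← hLimEq _ hg]; exact ⟨hx, mem_cyl_res x n⟩
        exact this.1
      · right
        have hxB : res x n ∈ B := by
          rw [hB, Finset.mem_filter]
          refine ⟨hxF, fun hlt => hg ?_⟩
          rw [hG, Finset.mem_filter]; exact ⟨hxF, hlt⟩
        exact Set.mem_biUnion hxB (mem_cyl_res x n)
    calc m ≤ μC (LimT S') + μC (⋃ η ∈ B, cyl η) :=
          le_trans (measure_mono hcover) (measure_union_le _ _)
      _ ≤ μC (LimT S') + β := add_le_add_right (le_trans hBun hBsmall.le) _
  · intro η hη hlen
    have hg := hLvlG η hη hlen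
    have := (Finset.mem_filter.mp hg).2
    rw [hLimEq η hg] at this
    exact this


lemma nonempty_iInter_of_antitone_finite {α : Type*} (E : ℕ → Set α)
    (hanti : ∀ j k, j ≤ k → E k ⊆ E j) (hfin : (E 0).Finite) (hne : ∀ j, (E j).Nonempty) :
    (⋂ j, E j).Nonempty := by
  classical
  by_contra h
  rw [Set.not_nonempty_iff_eq_empty] at h
  have hall : ∀ a : α, ∃ j, a ∉ E j := by
    intro a
    by_contra ha
    push_neg at ha
    exact absurd (Set.mem_iInter.mpr ha) (h ▸ Set.notMem_empty a)
  choose jf hjf using hall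
  set J := hfin.toFinset.sup jf with hJ
  obtain ⟨a, ha⟩ := hne J
  have ha0 : a ∈ E 0 := hanti 0 J (Nat.zero_le J) ha
  have hle : jf a ≤ J := Finset.le_sup (hfin.mem_toFinset.mpr ha0)
  exact hjf a (hanti (jf a) J hle ha)

lemma LimT_iInter (S : ℕ → Set FinSeq) : LimT (⋂ i, S i) = ⋂ i, LimT (S i) := by
  ext x
  simp only [LimT, Set.mem_setOf_eq, Set.mem_iInter]
  exact ⟨fun h i n => h n i, fun h n i => h i n⟩

lemma LimT_through (T' : Set FinSeq) (η : FinSeq) :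
    LimT (through T' η) = LimT T' ∩ cyl η := by
  ext x
  constructor
  · intro h
    refine ⟨fun k => (h k).1, ?_⟩
    rcases (h η.length).2 with h2 | h2
    · exact h2.eq_of_length (res_length x η.length)
    · show res x η.length = η
      exact (h2.eq_of_length (res_length x η.length).symm).symm
  · rintro ⟨h1, h2⟩ k
    have hres : res x η.length = η := h2
    refine ⟨h1 k, ?_⟩
    rcases le_or_gt k η.length with hk | hk
    · exact Or.inl (hres ▸ res_prefix x hk)
    · exact Or.inr (hres ▸ res_prefix x hk.le)

/-- The auxiliary pruning parameter. -/
noncomputable def cc (εs : ℕ → ENNReal) (i : ℕ) : ENNReal := min (εs i) 1 / 2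

lemma cc_pos {εs : ℕ → ENNReal} {i : ℕ} (h : 0 < εs i) : 0 < cc εs i :=
  ENNReal.div_pos (lt_min h one_pos).ne' (by norm_num)

lemma cc_le_one (εs : ℕ → ENNReal) (i : ℕ) : cc εs i ≤ 1 := by
  unfold cc
  calc min (εs i) 1 / 2 ≤ 1 / 2 := ENNReal.div_le_div_right (min_le_right _ _) 2
    _ ≤ 1 := by norm_num

lemma cc_key {εs : ℕ → ENNReal} {i : ℕ} (h : 0 < εs i) : 1 - εs i < 1 - cc εs i := by
  rcases le_or_gt 1 (εs i) with h1 | h1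
  · rw [tsub_eq_zero_of_le h1]
    rw [tsub_pos_iff_lt]
    calc cc εs i ≤ 1 / 2 := ENNReal.div_le_div_right (min_le_right _ _) 2
      _ < 1 := by norm_num
  · have hcc : cc εs i < εs i := by
      unfold cc
      rw [min_eq_left h1.le]
      exact ENNReal.half_lt_self h.ne' (h1.trans ENNReal.one_lt_top).ne
    exact (AddLECancellable.tsub_lt_tsub_iff_left_of_le
      (ENNReal.cancel_of_ne ENNReal.one_ne_top)
      (ENNReal.cancel_of_ne (h1.trans ENNReal.one_lt_top).ne) h1.le).mpr hcc

lemma nil_mem_tree {S : Set FinSeq} (hS : IsTree S) : [] ∈ S := by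
  obtain ⟨σ, hσ⟩ := hS.1
  exact hS.2.1 [] σ List.nil_prefix hσ

/-- Lemma B. -/
theorem stmt11 (T : Set FinSeq) (hT : IsTree T) (h0 : 0 < μC (LimT T))
    (ε : ENNReal) (hε : 0 < ε) (εs : ℕ → ENNReal) (hεs : ∀ i, 0 < i → 0 < εs i) :
    ∃ T' : Set FinSeq, IsTree T' ∧ T' ⊆ T ∧
      ∃ n : ℕ → ℕ, StrictMono n ∧ n 0 = 0 ∧
        μC (LimT T) - ε < μC (LimT T') ∧
        ∀ i, 0 < i → ∀ η ∈ T', η.length = n i →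
          (2 : ENNReal)⁻¹ ^ n i * (1 - εs i) < μC (LimT (through T' η)) := by
  classical
  set m := μC (LimT T) with hm
  have hmtop : m ≠ ⊤ := (measure_lt_top μC _).ne
  set ε' := min ε 1 with hε'
  have hε'pos : 0 < ε' := lt_min hε one_pos
  have hε'top : ε' ≠ ⊤ := ((min_le_right _ _).trans_lt ENNReal.one_lt_top).ne
  set R₀ := (ε' / 2) ⊓ (m / 2) with hR₀
  have hR₀pos : 0 < R₀ :=
    lt_min (ENNReal.div_pos hε'pos.ne' (by norm_num)) (ENNReal.div_pos h0.ne' (by norm_num))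
  have hR₀top : R₀ ≠ ⊤ :=
    ((min_le_left _ _).trans_lt (ENNReal.div_lt_top hε'top (by norm_num))).ne
  have hR₀m : R₀ ≤ m / 2 := min_le_right _ _
  have hR₀ε : R₀ ≤ ε' / 2 := min_le_left _ _
  set g : ℕ → ℕ → ENNReal :=
    fun i n => (1 - cc εs i) * (2 : ENNReal)⁻¹ ^ n - (1 - εs i) * (2 : ENNReal)⁻¹ ^ n with hg
  have hx2pos : ∀ n : ℕ, (0 : ENNReal) < 2⁻¹ ^ n :=
    fun n => ENNReal.pow_pos (ENNReal.inv_pos.mpr (by norm_num)) n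
  have hx2top : ∀ n : ℕ, ((2 : ENNReal)⁻¹ ^ n) ≠ ⊤ :=
    fun n => ENNReal.pow_ne_top (ENNReal.inv_ne_top.mpr (by norm_num))
  -- state space of the recursion
  let St := {p : Set FinSeq × ℕ × ENNReal //
    IsTree p.1 ∧ p.1 ⊆ T ∧ 0 < p.2.2 ∧ p.2.2 ≠ ⊤ ∧ p.2.2 ≤ R₀ ∧
      m + p.2.2 ≤ μC (LimT p.1) + R₀}
  have hstep : ∀ (i : ℕ) (st : St), ∃ st' : St,
      st'.1.1 ⊆ st.1.1 ∧ st.1.2.1 < st'.1.2.1 ∧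
      μC (LimT st.1.1) ≤ μC (LimT st'.1.1) + st.1.2.2 / 2 ∧
      st'.1.2.2 ≤ st.1.2.2 / 2 ∧ st'.1.2.2 ≤ g (i + 1) st'.1.2.1 / 2 ∧
      (∀ η ∈ st'.1.1, η.length = st'.1.2.1 →
        (1 - cc εs (i + 1)) * (2 : ENNReal)⁻¹ ^ st'.1.2.1 < μC (LimT st'.1.1 ∩ cyl η)) := by
    rintro i ⟨⟨S, N, R⟩, hSt, hSsub, hRpos, hRtop, hRle, hmeas⟩
    have hμS : m / 2 ≤ μC (LimT S) := by
      have h1 : m ≤ μC (LimT S) + R₀ := le_trans le_self_add hmeas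
      have h2 : m ≤ μC (LimT S) + m / 2 := h1.trans (add_le_add_right hR₀m _)
      calc m / 2 = m - m / 2 := (ENNReal.sub_half hmtop).symm
        _ ≤ μC (LimT S) := tsub_le_iff_right.mpr h2
    have hm2pos : (0 : ENNReal) < m / 2 := ENNReal.div_pos h0.ne' (by norm_num)
    have hm2top : m / 2 ≠ ⊤ := (ENNReal.div_lt_top hmtop (by norm_num)).ne
    have hβ : R / 2 < μC (LimT S) := by
      calc R / 2 ≤ R₀ / 2 := ENNReal.div_le_div_right hRle 2
        _ ≤ (m / 2) / 2 := ENNReal.div_le_div_right hR₀m 2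
        _ < m / 2 := ENNReal.half_lt_self hm2pos.ne' hm2top
        _ ≤ μC (LimT S) := hμS
    obtain ⟨n', hn', S', hS'tree, hS'sub, hmb, hlevel⟩ :=
      onestep S hSt (cc εs (i + 1)) (R / 2) (cc_pos (hεs (i + 1) (Nat.succ_pos i)))
        (cc_le_one εs (i + 1)) (ENNReal.div_pos hRpos.ne' (by norm_num)) hβ N
    have hgpos : 0 < g (i + 1) n' := by
      rw [hg]
      simp only
      rw [tsub_pos_iff_lt]
      exact (ENNReal.mul_lt_mul_iff_left (hx2pos n').ne' (hx2top n')).mpr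
        (cc_key (hεs (i + 1) (Nat.succ_pos i)))
    have hgtop : g (i + 1) n' ≠ ⊤ := by
      have hle : g (i + 1) n' ≤ (2 : ENNReal)⁻¹ ^ n' := by
        rw [hg]
        refine le_trans tsub_le_self ?_
        exact mul_le_of_le_one_left (zero_le) tsub_le_self
      exact (hle.trans_lt (lt_top_iff_ne_top.mpr (hx2top n'))).ne
    have hR2top : R / 2 ≠ ⊤ := (ENNReal.div_lt_top hRtop (by norm_num)).ne
    refine ⟨⟨(S', n', (R / 2) ⊓ (g (i + 1) n' / 2)), hS'tree, hS'sub.trans hSsub, ?_, ?_, ?_, ?_⟩,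
      hS'sub, hn', hmb, min_le_left _ _, min_le_right _ _, hlevel⟩
    · exact lt_min (ENNReal.div_pos hRpos.ne' (by norm_num))
        (ENNReal.div_pos hgpos.ne' (by norm_num))
    · exact ((min_le_left _ _).trans_lt (lt_top_iff_ne_top.mpr hR2top)).ne
    · calc (R / 2) ⊓ (g (i + 1) n' / 2) ≤ R / 2 := min_le_left _ _
        _ ≤ R := ENNReal.half_le_self
        _ ≤ R₀ := hRle
    · -- m + R' ≤ μ(Lim S') + R₀
      have h1 : m + R ≤ μC (LimT S') + R / 2 + R₀ := by
        calc m + R ≤ μC (LimT S) + R₀ := hmeas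
          _ ≤ (μC (LimT S') + R / 2) + R₀ := add_le_add_left hmb _
      have h2 : m + R / 2 ≤ μC (LimT S') + R₀ := by
        have e1 : m + R = (m + R / 2) + R / 2 := by
          rw [add_assoc, ENNReal.add_halves]
        have e2 : μC (LimT S') + R / 2 + R₀ = (μC (LimT S') + R₀) + R / 2 := by ring
        rw [e2, e1] at h1
        have := tsub_le_tsub_right h1 (R / 2)
        rwa [ENNReal.add_sub_cancel_right hR2top, ENNReal.add_sub_cancel_right hR2top] at this
      calc m + ((R / 2) ⊓ (g (i + 1) n' / 2)) ≤ m + R / 2 := add_le_add_right (min_le_left _ _) _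
        _ ≤ μC (LimT S') + R₀ := h2
  -- the recursively defined sequence of stages
  have hst0prop : IsTree (T, 0, R₀).1 ∧ (T, 0, R₀).1 ⊆ T ∧ 0 < (T, 0, R₀).2.2 ∧
      (T, 0, R₀).2.2 ≠ ⊤ ∧ (T, 0, R₀).2.2 ≤ R₀ ∧
      m + (T, 0, R₀).2.2 ≤ μC (LimT (T, 0, R₀).1) + R₀ :=
    ⟨hT, subset_rfl, hR₀pos, hR₀top, le_rfl, le_rfl⟩
  let st0 : St := ⟨(T, 0, R₀), hst0prop⟩
  let f : ℕ → St := fun i => Nat.rec st0 (fun i st => (hstep i st).choose) i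
  have hrel : ∀ i, ((f (i + 1)).1.1 ⊆ (f i).1.1 ∧ (f i).1.2.1 < (f (i + 1)).1.2.1 ∧
      μC (LimT (f i).1.1) ≤ μC (LimT (f (i + 1)).1.1) + (f i).1.2.2 / 2 ∧
      (f (i + 1)).1.2.2 ≤ (f i).1.2.2 / 2 ∧
      (f (i + 1)).1.2.2 ≤ g (i + 1) (f (i + 1)).1.2.1 / 2 ∧
      (∀ η ∈ (f (i + 1)).1.1, η.length = (f (i + 1)).1.2.1 →
        (1 - cc εs (i + 1)) * (2 : ENNReal)⁻¹ ^ (f (i + 1)).1.2.1 <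
          μC (LimT (f (i + 1)).1.1 ∩ cyl η))) :=
    fun i => (hstep i (f i)).choose_spec
  set Sq : ℕ → Set FinSeq := fun i => (f i).1.1 with hSq
  set nq : ℕ → ℕ := fun i => (f i).1.2.1 with hnq
  set Rq : ℕ → ENNReal := fun i => (f i).1.2.2 with hRq
  have hSq0 : Sq 0 = T := rfl
  have hnq0 : nq 0 = 0 := rfl
  have hRq0 : Rq 0 = R₀ := rfl
  have hSmono : Antitone Sq := antitone_nat_of_succ_le (fun i => (hrel i).1)
  set T' : Set FinSeq := ⋂ i, Sq i with hT'
  have hT'sub : ∀ i, T' ⊆ Sq i := fun i => Set.iInter_subset Sq i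
  -- T' is a tree
  have hT'tree : IsTree T' := by
    refine ⟨⟨[], Set.mem_iInter.mpr (fun i => nil_mem_tree (f i).2.1)⟩, ?_, ?_⟩
    · intro σ τ hστ hτ
      exact Set.mem_iInter.mpr (fun i => (f i).2.1.2.1 σ τ hστ (Set.mem_iInter.mp hτ i))
    · intro τ hτ k hk
      set E : ℕ → Set FinSeq := fun j => {ρ ∈ Sq j | τ <+: ρ ∧ ρ.length = k} with hE
      have hEanti : ∀ j j', j ≤ j' → E j' ⊆ E j :=
        fun j j' h ρ hρ => ⟨hSmono h hρ.1, hρ.2⟩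
      have hEfin : (E 0).Finite :=
        (List.finite_length_eq (α := ZMod 2) (n := k)).subset (fun ρ hρ => hρ.2.2)
      have hEne : ∀ j, (E j).Nonempty := by
        intro j
        obtain ⟨ρ, hρ, hpre, hlen⟩ := (f j).2.1.2.2 τ (Set.mem_iInter.mp hτ j) k hk
        exact ⟨ρ, hρ, hpre, hlen⟩
      obtain ⟨ρ, hρ⟩ := nonempty_iInter_of_antitone_finite E hEanti hEfin hEne
      have h1 := Set.mem_iInter.mp hρ 0
      exact ⟨ρ, Set.mem_iInter.mpr (fun j => (Set.mem_iInter.mp hρ j).1), h1.2.1, h1.2.2⟩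
  -- decay of the budgets
  have hRdecay : ∀ i t, Rq (i + t) ≤ Rq i * (2 : ENNReal)⁻¹ ^ t := by
    intro i t
    induction t with
    | zero => simp
    | succ t ih =>
      calc Rq (i + (t + 1)) = Rq ((i + t) + 1) := by ring_nf
        _ ≤ Rq (i + t) / 2 := (hrel (i + t)).2.2.2.1
        _ ≤ (Rq i * 2⁻¹ ^ t) / 2 := ENNReal.div_le_div_right ih 2
        _ = Rq i * 2⁻¹ ^ (t + 1) := by
          rw [div_eq_mul_inv, pow_succ, mul_assoc]
  have hRqtop : ∀ i, Rq i ≠ ⊤ := fun i => (f i).2.2.2.2.1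
  -- tail measure bound
  have htail : ∀ (i : ℕ) (C : Set Cantor),
      μC (LimT (Sq i) ∩ C) ≤ μC (LimT T' ∩ C) + Rq i := by
    intro i C
    have hLT' : LimT T' = ⋂ j, LimT (Sq j) := by rw [hT', LimT_iInter]
    have hsub : LimT (Sq i) ∩ C ⊆
        (LimT T' ∩ C) ∪ ⋃ t, (LimT (Sq (i + t)) \ LimT (Sq (i + t + 1))) := by
      rintro x ⟨hx, hxC⟩
      by_cases hx' : x ∈ LimT T'
      · exact Or.inl ⟨hx', hxC⟩
      · right
        rw [hLT'] at hx'
        simp only [Set.mem_iInter, not_forall] at hx'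
        have hex : ∃ j, x ∉ LimT (Sq j) := hx'
        have hk := Nat.find_spec hex
        set k := Nat.find hex with hkdef
        have hik : i < k := by
          by_contra hik
          push_neg at hik
          exact hk (LimT_mono (hSmono hik) hx)
        have hprev : x ∈ LimT (Sq (k - 1)) := by
          by_contra hp
          exact absurd (Nat.find_min' hex hp) (by omega)
        refine Set.mem_iUnion.mpr ⟨k - 1 - i, ?_⟩
        have e1 : i + (k - 1 - i) = k - 1 := by omega
        have e2 : i + (k - 1 - i) + 1 = k := by omega
        rw [e2, e1]
        exact ⟨hprev, hk⟩
    have hDk : ∀ t : ℕ, μC (LimT (Sq (i + t)) \ LimT (Sq (i + t + 1))) ≤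
        Rq i * (2 : ENNReal)⁻¹ ^ (t + 1) := by
      intro t
      have hd : μC (LimT (Sq (i + t)) \ LimT (Sq (i + t + 1))) ≤ Rq (i + t) / 2 := by
        rw [measure_diff (LimT_mono (hrel (i + t)).1)
          (measurableSet_LimT _).nullMeasurableSet (measure_lt_top μC _).ne]
        exact tsub_le_iff_left.mpr (hrel (i + t)).2.2.1
      calc μC (LimT (Sq (i + t)) \ LimT (Sq (i + t + 1))) ≤ Rq (i + t) / 2 := hd
        _ ≤ (Rq i * 2⁻¹ ^ t) / 2 := ENNReal.div_le_div_right (hRdecay i t) 2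
        _ = Rq i * 2⁻¹ ^ (t + 1) := by rw [div_eq_mul_inv, pow_succ, mul_assoc]
    calc μC (LimT (Sq i) ∩ C)
        ≤ μC ((LimT T' ∩ C) ∪ ⋃ t, (LimT (Sq (i + t)) \ LimT (Sq (i + t + 1)))) :=
          measure_mono hsub
      _ ≤ μC (LimT T' ∩ C) + μC (⋃ t, (LimT (Sq (i + t)) \ LimT (Sq (i + t + 1)))) :=
          measure_union_le _ _
      _ ≤ μC (LimT T' ∩ C) + ∑' t, μC (LimT (Sq (i + t)) \ LimT (Sq (i + t + 1))) :=
          add_le_add_right (measure_iUnion_le _) _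
      _ ≤ μC (LimT T' ∩ C) + ∑' t, Rq i * (2 : ENNReal)⁻¹ ^ (t + 1) :=
          add_le_add_right (ENNReal.tsum_le_tsum hDk) _
      _ = μC (LimT T' ∩ C) + Rq i := by
          rw [ENNReal.tsum_mul_left, ENNReal.tsum_geometric_add_one, ENNReal.one_sub_inv_two,
            inv_inv,
            ENNReal.inv_mul_cancel (by norm_num) (by norm_num), mul_one]
  refine ⟨T', hT'tree, by rw [← hSq0]; exact hT'sub 0, nq,
    strictMono_nat_of_lt_succ (fun i => (hrel i).2.1), hnq0, ?_, ?_⟩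
  · -- global measure bound
    have h00 := htail 0 Set.univ
    rw [Set.inter_univ, Set.inter_univ, hSq0, hRq0] at h00
    show m - ε < μC (LimT T')
    rcases le_or_gt m ε with hcase | hcase
    · rw [tsub_eq_zero_of_le hcase]
      have h1 : m ≤ μC (LimT T') + m / 2 := h00.trans (add_le_add_right hR₀m _)
      have h2 : m / 2 ≤ μC (LimT T') := by
        calc m / 2 = m - m / 2 := (ENNReal.sub_half hmtop).symm
          _ ≤ _ := tsub_le_iff_right.mpr h1
      exact lt_of_lt_of_le (ENNReal.div_pos h0.ne' (by norm_num)) h2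
    · have hm1 : m ≤ 1 := prob_le_one
      have hε1 : ε < 1 := hcase.trans_le hm1
      have hεtop : ε ≠ ⊤ := (hε1.trans ENNReal.one_lt_top).ne
      have hε'eq : ε' = ε := min_eq_left hε1.le
      rw [ENNReal.sub_lt_iff_lt_right hεtop hcase.le]
      calc m ≤ μC (LimT T') + R₀ := h00
        _ ≤ μC (LimT T') + ε / 2 := by
            refine add_le_add_right ?_ _
            rw [← hε'eq]
            exact hR₀ε
        _ < μC (LimT T') + ε :=
            (ENNReal.add_lt_add_iff_left (measure_lt_top μC _).ne).mpr
              (ENNReal.half_lt_self hε.ne' hεtop)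
  · -- level-wise bound
    intro i hi η hη hlen
    obtain ⟨i', rfl⟩ : ∃ i', i = i' + 1 := ⟨i - 1, (Nat.succ_pred_eq_of_pos hi).symm⟩
    set x := (2 : ENNReal)⁻¹ ^ (nq (i' + 1)) with hxdef
    have hηS : η ∈ Sq (i' + 1) := hT'sub (i' + 1) hη
    have hlt : (1 - cc εs (i' + 1)) * x < μC (LimT (Sq (i' + 1)) ∩ cyl η) :=
      (hrel i').2.2.2.2.2 η hηS hlen
    have ht := htail (i' + 1) (cyl η)
    have hRg : Rq (i' + 1) ≤ g (i' + 1) (nq (i' + 1)) / 2 := (hrel i').2.2.2.2.1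
    set G := g (i' + 1) (nq (i' + 1)) with hGdef
    have hεpos := hεs (i' + 1) (Nat.succ_pos i')
    have hle : (1 - εs (i' + 1)) * x ≤ (1 - cc εs (i' + 1)) * x :=
      mul_le_mul_left (cc_key hεpos).le x
    have hGeq : (1 - εs (i' + 1)) * x + G = (1 - cc εs (i' + 1)) * x := by
      rw [hGdef, hg]
      exact add_tsub_cancel_of_le hle
    have hGtop : G ≠ ⊤ := by
      have hle2 : G ≤ x := by
        rw [hGdef, hg]
        refine le_trans tsub_le_self ?_
        exact mul_le_of_le_one_left (zero_le) tsub_le_self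
      exact (hle2.trans_lt (lt_top_iff_ne_top.mpr (hx2top _))).ne
    have hG2top : G / 2 ≠ ⊤ := (ENNReal.div_lt_top hGtop (by norm_num)).ne
    have hchain : (1 - εs (i' + 1)) * x + G < μC (LimT T' ∩ cyl η) + G / 2 := by
      calc (1 - εs (i' + 1)) * x + G = (1 - cc εs (i' + 1)) * x := hGeq
        _ < μC (LimT (Sq (i' + 1)) ∩ cyl η) := hlt
        _ ≤ μC (LimT T' ∩ cyl η) + Rq (i' + 1) := ht
        _ ≤ μC (LimT T' ∩ cyl η) + G / 2 := add_le_add_right hRg _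
    have hfinal : (1 - εs (i' + 1)) * x + G / 2 < μC (LimT T' ∩ cyl η) := by
      have e : (1 - εs (i' + 1)) * x + G = ((1 - εs (i' + 1)) * x + G / 2) + G / 2 := by
        rw [add_assoc, ENNReal.add_halves]
      rw [e] at hchain
      exact (ENNReal.add_lt_add_iff_right hG2top).mp hchain
    rw [LimT_through, mul_comm]
    exact lt_of_le_of_lt le_self_add hfinal
end

section
/- A set X ⊆ 2^ω is meager-additive if and only if for every increasing sequence n_0 < n_1 < n_2 < … of natural numbers there are an increasing sequence i_0 < i_1 < … of naturals and y ∈ 2^ω such that for every x ∈ X and every sufficiently large k < ω, there is l ∈ [i_k, i_{k+1}) with x↾[n_l, n_{l+1}) = y↾[n_l, n_{l+1}). -/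
open MeasureTheory Pointwise

/-- Condition (b) of Theorem 18. -/
def MatchProp (X : Set Cantor) : Prop :=
  ∀ n : ℕ → ℕ, StrictMono n →
    ∃ i : ℕ → ℕ, StrictMono i ∧ ∃ y : Cantor,
      ∀ x ∈ X, ∀ᶠ k in Filter.atTop, ∃ l, i k ≤ l ∧ l < i (k + 1) ∧
        ∀ m, n l ≤ m → m < n (l + 1) → x m = y m

section Stmt14Aux
open Filter Set Topology

/-- Agreement with `z` on the interval `[s, t)`. -/
def cylEq (z : Cantor) (s t : ℕ) : Set Cantor := {w | ∀ m, s ≤ m → m < t → w m = z m}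

lemma isOpen_cylEq (z : Cantor) (s t : ℕ) : IsOpen (cylEq z s t) := by
  have : cylEq z s t = ⋂ m ∈ Finset.Ico s t, {w : Cantor | w m = z m} := by
    ext w
    constructor
    · intro h
      simp only [Set.mem_iInter, Finset.mem_Ico]
      exact fun m hm => h m hm.1 hm.2
    · intro h m h1 h2
      exact Set.mem_iInter₂.mp h m (Finset.mem_Ico.mpr ⟨h1, h2⟩)
  rw [this]
  refine isOpen_biInter_finset fun m _ => ?_
  have : {w : Cantor | w m = z m} = (fun w : Cantor => w m) ⁻¹' {z m} := rfl
  rw [this]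
  exact (continuous_apply m).isOpen_preimage _ (isOpen_discrete _)

lemma exists_cylEq_subset {U : Set Cantor} (hU : IsOpen U) {x : Cantor} (hx : x ∈ U) :
    ∃ t, cylEq x 0 t ⊆ U := by
  obtain ⟨I, u, hIu, hsub⟩ := isOpen_pi_iff.mp hU x hx
  refine ⟨(I.sup id) + 1, fun w hw => hsub fun a ha => ?_⟩
  have : w a = x a := hw a (Nat.zero_le _)
    (Nat.lt_succ_of_le (le_trans (le_of_eq rfl) (Finset.le_sup (f := id) ha)))
  rw [this]; exact (hIu a ha).2

lemma isNowhereDense_isMeagre {s : Set Cantor} (h : IsNowhereDense s) : IsMeagre s := by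
  rw [isMeagre_iff_countable_union_isNowhereDense]
  exact ⟨{s}, by simpa using h, Set.countable_singleton s, by simp⟩

lemma nwd_union {s t : Set Cantor} (hs : IsNowhereDense s) (ht : IsNowhereDense t) :
    IsNowhereDense (s ∪ t) := by
  have h1 : IsClosed (closure s) ∧ IsNowhereDense (closure s) := ⟨isClosed_closure, hs.closure⟩
  have h2 : IsClosed (closure t) ∧ IsNowhereDense (closure t) := ⟨isClosed_closure, ht.closure⟩
  rw [isClosed_isNowhereDense_iff_compl] at h1 h2
  have hd : Dense ((closure s)ᶜ ∩ (closure t)ᶜ) :=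
    h1.2.inter_of_isOpen_left h2.2 h1.1
  have : IsClosed (closure s ∪ closure t) ∧ IsNowhereDense (closure s ∪ closure t) := by
    rw [isClosed_isNowhereDense_iff_compl, Set.compl_union]
    exact ⟨h1.1.inter h2.1, hd⟩
  have hsub : s ∪ t ⊆ closure s ∪ closure t := Set.union_subset_union subset_closure subset_closure
  rw [IsNowhereDense]
  have := this.2
  rw [IsNowhereDense] at this
  refine Set.eq_empty_of_subset_empty ?_
  calc interior (closure (s ∪ t)) ⊆ interior (closure (closure s ∪ closure t)) := by
        exact interior_mono (closure_mono hsub)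
    _ = ∅ := this

/-- The basic combinatorial meagre sets. -/
def blockSet (n : ℕ → ℕ) (y : Cantor) (N : ℕ) : Set Cantor :=
  {w | ∀ k, N ≤ k → ∃ t, n k ≤ t ∧ t < n (k + 1) ∧ w t ≠ y t}

lemma blockSet_nwd {n : ℕ → ℕ} (hn : StrictMono n) (y : Cantor) (N : ℕ) :
    IsNowhereDense (blockSet n y N) := by
  have hcompl : (blockSet n y N)ᶜ = ⋃ k ∈ {k | N ≤ k}, cylEq y (n k) (n (k+1)) := by
    ext w
    simp only [Set.mem_compl_iff, blockSet, Set.mem_setOf_eq, Set.mem_iUnion, cylEq]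
    push_neg
    constructor
    · rintro ⟨k, hk, h⟩
      exact ⟨k, hk, fun m h1 h2 => h m h1 h2⟩
    · rintro ⟨k, hk, h⟩
      exact ⟨k, hk, fun m h1 h2 => h m h1 h2⟩
  have hopen : IsOpen (blockSet n y N)ᶜ := by
    rw [hcompl]; exact isOpen_biUnion fun k _ => isOpen_cylEq y _ _
  have hdense : Dense (blockSet n y N)ᶜ := by
    rw [dense_iff_inter_open]
    intro U hU ⟨x, hx⟩
    obtain ⟨r, hr⟩ := exists_cylEq_subset hU hx
    set k := max N r with hk
    refine ⟨fun m => if n k ≤ m ∧ m < n (k+1) then y m else x m, hr ?_, ?_⟩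
    · intro m _ hm
      have : ¬ (n k ≤ m ∧ m < n (k+1)) := by
        rintro ⟨h1, -⟩
        have : r ≤ n k := le_trans (le_max_right N r) (le_trans (hn.le_apply) (le_refl _))
        omega
      simp [this]
    · rw [hcompl]
      refine Set.mem_biUnion (show N ≤ k from le_max_left N r) ?_
      intro m h1 h2
      simp [h1, h2]
  have : IsClosed (blockSet n y N) ∧ IsNowhereDense (blockSet n y N) := by
    rw [isClosed_isNowhereDense_iff_compl]; exact ⟨hopen, hdense⟩
  exact this.2

lemma blockSet_meagre {n : ℕ → ℕ} (hn : StrictMono n) (y : Cantor) :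
    IsMeagre (⋃ N, blockSet n y N) :=
  isMeagre_iUnion fun N => isNowhereDense_isMeagre (blockSet_nwd hn y N)

lemma step_list {G : Set Cantor} (hGc : IsClosed G) (hGn : IsNowhereDense G) (s : ℕ)
    (L : List (Fin s → ZMod 2)) :
    ∃ t, s ≤ t ∧ ∃ e : Cantor,
      ∀ σ ∈ L, ∀ w : Cantor, (∀ m : Fin s, w m = σ m) →
        (∀ m, s ≤ m → m < t → w m = e m) → w ∉ G := by
  induction L with
  | nil => exact ⟨s, le_refl s, fun _ => 0, by simp⟩
  | cons σ L ih =>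
    obtain ⟨t, hts, e, he⟩ := ih
    set p : Cantor := fun m => if h : m < s then σ ⟨m, h⟩ else e m with hp
    have hopen : IsOpen (cylEq p 0 t) := isOpen_cylEq p 0 t
    have hGcompl : IsOpen Gᶜ ∧ Dense Gᶜ := isClosed_isNowhereDense_iff_compl.mp ⟨hGc, hGn⟩
    have hne : (cylEq p 0 t ∩ Gᶜ).Nonempty := by
      rcases (dense_iff_inter_open.mp hGcompl.2) (cylEq p 0 t) hopen ⟨p, fun m _ _ => rfl⟩ with ⟨q, hq⟩
      exact ⟨q, hq⟩
    obtain ⟨q, hqV, hqG⟩ := hne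
    obtain ⟨r, hr⟩ := exists_cylEq_subset (hGcompl.1.inter hopen) ⟨hqG, hqV⟩
    refine ⟨max t r, le_trans hts (le_max_left t r), q, ?_⟩
    intro σ' hσ' w hwσ hwe
    rcases List.mem_cons.mp hσ' with h | h
    · -- σ' = σ : use the new cylinder around q
      subst h
      have hwq : w ∈ cylEq q 0 r := by
        intro m _ hmr
        by_cases hms : m < s
        · have hqp : q m = p m := hqV m (Nat.zero_le _) (lt_of_lt_of_le hms hts)
          rw [hwσ ⟨m, hms⟩, hqp, hp]
          simp [hms]
        · exact hwe m (le_of_not_gt hms) (lt_of_lt_of_le hmr (le_max_right t r))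
      exact (hr hwq).1
    · -- σ' ∈ L : use induction hypothesis; q agrees with e on [s, t)
      refine he σ' h w hwσ ?_
      intro m hms hmt
      have h1 : w m = q m := hwe m hms (lt_of_lt_of_le hmt (le_max_left t r))
      have h2 : q m = p m := hqV m (Nat.zero_le _) hmt
      rw [h1, h2, hp]
      simp [Nat.not_lt.mpr hms]

lemma step {G : Set Cantor} (hGc : IsClosed G) (hGn : IsNowhereDense G) (s : ℕ) :
    ∃ t, s ≤ t ∧ ∃ e : Cantor,
      ∀ w : Cantor, (∀ m, s ≤ m → m < t → w m = e m) → w ∉ G := by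
  obtain ⟨t, hts, e, he⟩ := step_list hGc hGn s (Finset.univ : Finset (Fin s → ZMod 2)).toList
  exact ⟨t, hts, e, fun w hw => he (fun m : Fin s => w m)
    (Finset.mem_toList.mpr (Finset.mem_univ _)) w (fun m => rfl) hw⟩

lemma cover {A : Set Cantor} (hA : IsMeagre A) {n : ℕ → ℕ} (hn : StrictMono n) :
    ∃ i : ℕ → ℕ, StrictMono i ∧ ∃ y : Cantor,
      ∀ w ∈ A, ∀ᶠ k in atTop, ∃ t, n (i k) ≤ t ∧ t < n (i (k+1)) ∧ w t ≠ y t := by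
  classical
  obtain ⟨S, hSn, hSc, hSsub⟩ := isMeagre_iff_countable_union_isNowhereDense.mp hA
  -- enumerate S (padded with ∅)
  obtain ⟨f, hf⟩ := (hSc.insert ∅).exists_eq_range (Set.insert_nonempty _ _)
  have hfn : ∀ j, IsNowhereDense (f j) := by
    intro j
    have : f j ∈ insert (∅ : Set Cantor) S := hf ▸ Set.mem_range_self j
    rcases Set.mem_insert_iff.mp this with h | h
    · rw [h]; exact isNowhereDense_empty
    · exact hSn _ h
  have hAsub : ∀ w ∈ A, ∃ j, w ∈ f j := by
    intro w hw
    obtain ⟨u, huS, hwu⟩ := hSsub hw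
    have : u ∈ insert (∅ : Set Cantor) S := Set.mem_insert_iff.mpr (Or.inr huS)
    rw [hf] at this
    obtain ⟨j, rfl⟩ := this
    exact ⟨j, hwu⟩
  -- increasing closed nwd hulls
  set G : ℕ → Set Cantor := fun k => Nat.rec (closure (f 0))
    (fun k Gk => closure (Gk ∪ f (k+1))) k with hG
  have hGc : ∀ k, IsClosed (G k) := by
    intro k; cases k with
    | zero => exact isClosed_closure
    | succ k => exact isClosed_closure
  have hGn : ∀ k, IsNowhereDense (G k) := by
    intro k; induction k with
    | zero => exact (hfn 0).closure
    | succ k ih => exact (nwd_union ih (hfn (k+1))).closure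
  have hGmono : ∀ k, G k ⊆ G (k+1) := fun k =>
    (Set.subset_union_left).trans subset_closure
  have hGf : ∀ j k, j ≤ k → f j ⊆ G k := by
    intro j k hjk
    induction k with
    | zero =>
      interval_cases j
      exact subset_closure
    | succ k ih =>
      rcases Nat.lt_or_ge j (k+1) with h | h
      · exact (ih (Nat.lt_succ_iff.mp h)).trans (hGmono k)
      · have : j = k + 1 := le_antisymm hjk h
        subst this
        exact (Set.subset_union_right).trans subset_closure
  -- the recursive construction
  have hstep : ∀ k (j : ℕ) (z : Cantor), ∃ p : ℕ × Cantor, j < p.1 ∧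
      (∀ m, m < n j → p.2 m = z m) ∧
      ∀ w : Cantor, (∀ m, n j ≤ m → m < n p.1 → w m = p.2 m) → w ∉ G k := by
    intro k j z
    obtain ⟨t, hts, e, he⟩ := step (hGc k) (hGn k) (n j)
    refine ⟨(max (j+1) t, fun m => if m < n j then z m else e m), lt_of_lt_of_le (Nat.lt_succ_self j) (le_max_left _ _), fun m hm => by simp [hm], ?_⟩
    intro w hw
    refine he w ?_
    intro m h1 h2
    have hmt : m < n (max (j+1) t) :=
      lt_of_lt_of_le h2 (le_trans (le_max_right (j+1) t) hn.le_apply)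
    have := hw m h1 hmt
    simpa [Nat.not_lt.mpr h1] using this
  choose F hF1 hF2 hF3 using hstep
  -- the state sequence
  set st : ℕ → ℕ × Cantor := fun k => Nat.rec ((0 : ℕ), (0 : Cantor))
    (fun k p => F k p.1 p.2) k with hst
  set i : ℕ → ℕ := fun k => (st k).1 with hi
  set zs : ℕ → Cantor := fun k => (st k).2 with hzs
  have hst_succ : ∀ k, st (k+1) = F k (i k) (zs k) := fun k => rfl
  have hilt : ∀ k, i k < i (k+1) := by
    intro k
    have := hF1 k (i k) (zs k)
    simpa [hi, hst_succ] using this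
  have himono : StrictMono i := strictMono_nat_of_lt_succ hilt
  have hstab1 : ∀ k m, m < n (i k) → zs (k+1) m = zs k m := by
    intro k m hm
    have := hF2 k (i k) (zs k) m hm
    simpa [hzs, hst_succ] using this
  have hstab : ∀ k k', k ≤ k' → ∀ m, m < n (i k) → zs k' m = zs k m := by
    intro k k' hkk'
    induction k' with
    | zero =>
      intro m hm
      have : k = 0 := Nat.le_zero.mp hkk'
      rw [this]
    | succ k' ih =>
      intro m hm
      rcases Nat.lt_or_ge k (k'+1) with h | h
      · have hk' : k ≤ k' := Nat.lt_succ_iff.mp h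
        have h2 : m < n (i k') := lt_of_lt_of_le hm (hn.monotone (himono.monotone hk'))
        rw [hstab1 k' m h2]
        exact ih hk' m hm
      · have : k = k' + 1 := le_antisymm hkk' h
        rw [this]
  set y : Cantor := fun m => zs (m+1) m with hy
  have hnik : ∀ k, k ≤ n (i k) := fun k =>
    le_trans himono.le_apply hn.le_apply
  have hyeq : ∀ k m, m < n (i (k+1)) → y m = zs (k+1) m := by
    intro k m hm
    rcases Nat.le_total (m+1) (k+1) with h | h
    · have h1 : m < n (i (m+1)) := lt_of_lt_of_le (Nat.lt_succ_self m) (hnik (m+1))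
      rw [hy]
      exact (hstab (m+1) (k+1) h m h1).symm
    · rw [hy]
      exact hstab (k+1) (m+1) h m hm
  refine ⟨i, himono, y, ?_⟩
  intro w hw
  obtain ⟨N, hwN⟩ := hAsub w hw
  rw [eventually_atTop]
  refine ⟨N, fun k hk => ?_⟩
  have hwG : w ∈ G k := hGf N k hk hwN
  by_contra hcon
  push_neg at hcon
  have : ∀ m, n (i k) ≤ m → m < n (i (k+1)) → w m = zs (k+1) m := by
    intro m h1 h2
    have := hcon m h1 h2
    rw [← hyeq k m h2]
    exact not_not.mp (by simpa using this)
  have hnot : w ∉ G k := by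
    have h3 := hF3 k (i k) (zs k)
    rw [← hst_succ k] at h3
    exact h3 w this
  exact hnot hwG

def lof (n : ℕ → ℕ) (m : ℕ) : ℕ := Nat.findGreatest (fun l => n l ≤ m) m

lemma lof_spec {n : ℕ → ℕ} (hn : StrictMono n) {m : ℕ} (hm : n 0 ≤ m) :
    n (lof n m) ≤ m ∧ m < n (lof n m + 1) := by
  have h0 : n (lof n m) ≤ m :=
    Nat.findGreatest_spec (P := fun l => n l ≤ m) (Nat.zero_le m) hm
  refine ⟨h0, ?_⟩
  by_contra hcon
  push_neg at hcon
  have h1 : lof n m + 1 ≤ m := le_trans hn.le_apply hcon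
  have h2 : lof n m + 1 ≤ lof n m :=
    Nat.le_findGreatest h1 hcon
  omega

lemma lof_eq {n : ℕ → ℕ} (hn : StrictMono n) {l m : ℕ} (h1 : n l ≤ m) (h2 : m < n (l+1)) :
    lof n m = l := by
  have hm : n 0 ≤ m := le_trans (hn.monotone (Nat.zero_le l)) h1
  obtain ⟨ha, hb⟩ := lof_spec hn hm
  by_contra hne
  rcases Nat.lt_or_ge (lof n m) l with h | h
  · have : n (lof n m + 1) ≤ n l := hn.monotone h
    omega
  · have hl : l + 1 ≤ lof n m := by omega
    have : n (l+1) ≤ n (lof n m) := hn.monotone hl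
    omega

lemma zmod2_add_self : ∀ u : ZMod 2, u + u = 0 := by decide

lemma zmod2_add_eq_zero_iff : ∀ u v : ZMod 2, u + v = 0 ↔ u = v := by decide

theorem dir2 (X : Set Cantor) (hm : MatchProp X) : MeagerAdditive X := by
  intro A hA
  obtain ⟨i, hi, z, hz⟩ := cover hA strictMono_id
  obtain ⟨j, hj, y, hy⟩ := hm i hi
  refine IsMeagre.mono ?_ (blockSet_meagre (hi.comp hj) (y + z))
  rintro w hw
  rw [Set.mem_add] at hw
  obtain ⟨x, hx, a, ha, rfl⟩ := hw
  obtain ⟨N1, hN1⟩ := Filter.eventually_atTop.mp (hy x hx)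
  obtain ⟨N2, hN2⟩ := Filter.eventually_atTop.mp (hz a ha)
  refine Set.mem_iUnion.mpr ⟨max N1 N2, ?_⟩
  intro k hk
  obtain ⟨l, hl1, hl2, hagree⟩ := hN1 k (le_trans (le_max_left _ _) hk)
  have hlN2 : N2 ≤ l :=
    le_trans (le_trans (le_max_right N1 N2) hk) (le_trans hj.le_apply hl1)
  obtain ⟨t, ht1, ht2, htne⟩ := hN2 l hlN2
  refine ⟨t, ?_, ?_, ?_⟩
  · exact le_trans (hi.monotone hl1) ht1
  · exact lt_of_lt_of_le ht2 (hi.monotone hl2)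
  · have hxt : x t = y t := hagree t ht1 ht2
    show x t + a t ≠ y t + z t
    rw [hxt]
    intro hcontra
    exact htne (add_left_cancel hcontra)

theorem dir1 (X : Set Cantor) (h : MeagerAdditive X) : MatchProp X := by
  intro n hn
  classical
  have hA : IsMeagre (⋃ N, blockSet n 0 N) := blockSet_meagre hn 0
  have hXA := h _ hA
  obtain ⟨i, hi, y, hy⟩ := cover hXA hn
  refine ⟨i, hi, y, ?_⟩
  intro x hx
  by_contra hcon
  rw [Filter.not_eventually] at hcon
  set P : ℕ → Prop := fun l => ∃ m, n l ≤ m ∧ m < n (l + 1) ∧ x m ≠ y m with hP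
  set a : Cantor := fun m =>
    if P (lof n m) then x m + y m else (if m = n (lof n m) then 1 else 0) with haDef
  have haA : a ∈ ⋃ N, blockSet n 0 N := by
    refine Set.mem_iUnion.mpr ⟨0, fun k _ => ?_⟩
    by_cases hPk : P k
    · have hPk2 := hPk
      obtain ⟨m, h1, h2, hne⟩ := hPk2
      refine ⟨m, h1, h2, ?_⟩
      have hlofm : lof n m = k := lof_eq hn h1 h2
      have : a m = x m + y m := by rw [haDef]; simp only [hlofm, if_pos hPk]
      rw [this]
      show x m + y m ≠ (0 : Cantor) m
      intro hc
      exact hne ((zmod2_add_eq_zero_iff (x m) (y m)).mp hc)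
    · refine ⟨n k, le_refl _, hn (Nat.lt_succ_self k), ?_⟩
      have hlofnk : lof n (n k) = k := lof_eq hn (le_refl _) (hn (Nat.lt_succ_self k))
      have : a (n k) = 1 := by rw [haDef]; simp only [hlofnk, if_neg hPk, if_pos rfl, if_true]
      rw [this]
      show (1 : ZMod 2) ≠ 0
      decide
  have hxa : x + a ∈ X + (⋃ N, blockSet n 0 N) := Set.add_mem_add hx haA
  obtain ⟨k, hbad, t, ht1, ht2, htne⟩ := (hcon.and_eventually (hy (x + a) hxa)).exists
  push_neg at hbad
  have hn0t : n 0 ≤ t := le_trans (hn.monotone (Nat.zero_le _)) ht1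
  obtain ⟨hl1, hl2⟩ := lof_spec hn hn0t
  set l := lof n t with hl
  have hikl : i k ≤ l := by
    by_contra hcc
    push_neg at hcc
    have : n (l + 1) ≤ n (i k) := hn.monotone hcc
    omega
  have hlik : l < i (k + 1) := by
    by_contra hcc
    push_neg at hcc
    have : n (i (k + 1)) ≤ n l := hn.monotone hcc
    omega
  have hPl : P l := hbad l hikl hlik
  have hat : a t = x t + y t := by rw [haDef]; simp only [← hl, if_pos hPl]
  apply htne
  show x t + a t = y t
  rw [hat, ← add_assoc, zmod2_add_self, zero_add]

end Stmt14Aux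

/-- Theorem 18: characterization of the meager-additive sets. -/
theorem stmt14 (X : Set Cantor) : MeagerAdditive X ↔ MatchProp X := by
  exact ⟨fun h => dir1 X h, fun h => dir2 X h⟩
end
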